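/- Let p be a real polynomial of degree m ≥ 1 with p(0) = 1 and all roots real, distinct, lying in (0, κ], with smallest root x₁. Define φ(x) = p(x)·(x₁/(x₁−x))^{1/2} on [0, x₁). Then for every ν ≥ 0, sup_{x ∈ [0, x₁)} x^ν φ(x)² ≤ ν^ν |p'(0)|^{-ν} (with the convention 0⁰ = 1). -/

import Mathlib

open Polynomial

lemma key_rpow (ν S t : ℝ) (hν : 0 ≤ ν) (hS : 0 < S) (ht : 0 ≤ t) :
    t ^ ν * Real.exp (-(t * S)) ≤ ν ^ ν * S ^ (-ν) := by
  rcases hν.eq_or_lt with h0 | hν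
  · subst h0
    simp only [Real.rpow_zero, neg_zero, one_mul, mul_one]
    exact Real.exp_le_one_iff.mpr (by nlinarith)
  rcases ht.eq_or_lt with h0 | ht
  · subst h0
    rw [Real.zero_rpow hν.ne', zero_mul]
    positivity
  · set u := t * S with hu
    have hu0 : 0 < u := mul_pos ht hS
    have hlog : Real.log u ≤ Real.log ν + (u / ν - 1) := by
      have := Real.log_le_sub_one_of_pos (show 0 < u / ν by positivity)
      rwa [Real.log_div hu0.ne' hν.ne', sub_le_iff_le_add'] at this
    have hmul : ν * Real.log u ≤ ν * Real.log ν + u := by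
      have h2 := mul_le_mul_of_nonneg_left hlog hν.le
      rw [mul_add, mul_sub, mul_div_cancel₀ _ hν.ne'] at h2
      linarith
    have huν : u ^ ν ≤ ν ^ ν * Real.exp u := by
      rw [Real.rpow_def_of_pos hu0, Real.rpow_def_of_pos hν, ← Real.exp_add]
      exact Real.exp_le_exp.mpr (by rw [mul_comm (Real.log u), mul_comm (Real.log ν)]; exact hmul)
    have htu : t ^ ν = u ^ ν * S ^ (-ν) := by
      rw [hu, Real.mul_rpow ht.le hS.le, Real.rpow_neg hS.le, mul_assoc,
        mul_inv_cancel₀ (by positivity : (S:ℝ) ^ ν ≠ 0), mul_one]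
    rw [htu]
    calc u ^ ν * S ^ (-ν) * Real.exp (-u)
        ≤ ν ^ ν * Real.exp u * S ^ (-ν) * Real.exp (-u) := by
          exact mul_le_mul_of_nonneg_right
            (mul_le_mul_of_nonneg_right huν (Real.rpow_nonneg hS.le _))
            (Real.exp_pos _).le
      _ = ν ^ ν * S ^ (-ν) * (Real.exp u * Real.exp (-u)) := by ring
      _ = ν ^ ν * S ^ (-ν) := by rw [← Real.exp_add, add_neg_cancel, Real.exp_zero, mul_one]

lemma deriv_eval0 {ι : Type*} [DecidableEq ι] (s : Finset ι) (a : ι → ℝ) :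
    (Polynomial.derivative (∏ i ∈ s, (1 - Polynomial.C (a i) * Polynomial.X))).eval 0
      = -∑ i ∈ s, a i := by
  induction s using Finset.induction_on with
  | empty => simp
  | @insert j s hj ih =>
    rw [Finset.prod_insert hj, Polynomial.derivative_mul, Polynomial.eval_add,
      Polynomial.eval_mul, Polynomial.eval_mul, ih, Finset.sum_insert hj]
    simp [Polynomial.eval_prod]
    ring

theorem stmt_8 (m : ℕ) (hm : 0 < m) (κ : ℝ) (x : Fin m → ℝ)
    (hmono : StrictMono x) (hx : ∀ i, x i ∈ Set.Ioc 0 κ)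
    (p : Polynomial ℝ)
    (hp : p = ∏ i : Fin m, (1 - Polynomial.C (x i)⁻¹ * Polynomial.X))
    (φ : ℝ → ℝ)
    (hφ : ∀ t, φ t = p.eval t * Real.sqrt (x ⟨0, hm⟩ / (x ⟨0, hm⟩ - t))) :
    ∀ ν : ℝ, 0 ≤ ν → ∀ t ∈ Set.Ico (0 : ℝ) (x ⟨0, hm⟩),
      t ^ ν * (φ t) ^ 2 ≤ ν ^ ν * |(Polynomial.derivative p).eval 0| ^ (-ν) := by
  intro ν hν t ht
  obtain ⟨ht0, htlt⟩ := ht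
  set i0 : Fin m := ⟨0, hm⟩ with hi0
  have hx0 : 0 < x i0 := (hx _).1
  have hxpos : ∀ i, 0 < x i := fun i => (hx i).1
  have hxi : ∀ i, t < x i := fun i =>
    lt_of_lt_of_le htlt (hmono.monotone (show i0 ≤ i from Fin.le_def.mpr (Nat.zero_le _)))
  have hx0t : 0 < x i0 - t := sub_pos.mpr htlt
  have hfac : ∀ i, (0:ℝ) < 1 - (x i)⁻¹ * t := by
    intro i
    have h1 : t / x i < 1 := (div_lt_one (hxpos i)).mpr (hxi i)
    rw [div_eq_inv_mul] at h1
    linarith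
  have hfle : ∀ i, 1 - (x i)⁻¹ * t ≤ Real.exp (-((x i)⁻¹ * t)) := by
    intro i
    have := Real.add_one_le_exp (-((x i)⁻¹ * t))
    linarith
  have hpeval : p.eval t = ∏ i, (1 - (x i)⁻¹ * t) := by
    simp [hp, eval_prod]
  have hφsq : φ t ^ 2 = (∏ i, (1 - (x i)⁻¹ * t) ^ 2) * (x i0 / (x i0 - t)) := by
    rw [hφ, mul_pow, Real.sq_sqrt (by positivity : (0:ℝ) ≤ x i0 / (x i0 - t)),
      hpeval, ← Finset.prod_pow]
  set S : ℝ := ∑ i, (x i)⁻¹ with hSdef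
  have hSpos : 0 < S := Finset.sum_pos (fun i _ => inv_pos.mpr (hxpos i))
    ⟨i0, Finset.mem_univ _⟩
  have hexpprod : Real.exp (-(t * S)) = ∏ i, Real.exp (-((x i)⁻¹ * t)) := by
    rw [← Real.exp_sum]
    congr 1
    rw [hSdef, Finset.mul_sum, ← Finset.sum_neg_distrib]
    exact Finset.sum_congr rfl fun i _ => by ring
  have h1 : φ t ^ 2 ≤ Real.exp (-(t * S)) := by
    rw [hφsq, hexpprod,
      ← Finset.mul_prod_erase Finset.univ _ (Finset.mem_univ i0),
      ← Finset.mul_prod_erase Finset.univ (fun i => Real.exp (-((x i)⁻¹ * t)))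
        (Finset.mem_univ i0)]
    have hA : (1 - (x i0)⁻¹ * t) ^ 2 * (x i0 / (x i0 - t)) ≤
        Real.exp (-((x i0)⁻¹ * t)) := by
      have heq : (1 - (x i0)⁻¹ * t) ^ 2 * (x i0 / (x i0 - t)) = 1 - (x i0)⁻¹ * t := by
        field_simp
      rw [heq]
      exact hfle i0
    have hB : ∏ i ∈ Finset.univ.erase i0, (1 - (x i)⁻¹ * t) ^ 2 ≤
        ∏ i ∈ Finset.univ.erase i0, Real.exp (-((x i)⁻¹ * t)) := by
      refine Finset.prod_le_prod (fun i _ => sq_nonneg _) (fun i _ => ?_)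
      have hle : (1 - (x i)⁻¹ * t) ^ 2 ≤ Real.exp (-((x i)⁻¹ * t)) ^ 2 :=
        pow_le_pow_left₀ (hfac i).le (hfle i) 2
      have hexple : Real.exp (-((x i)⁻¹ * t)) ≤ 1 := by
        rw [Real.exp_le_one_iff]
        have : 0 ≤ (x i)⁻¹ * t := mul_nonneg (inv_nonneg.mpr (hxpos i).le) ht0
        linarith
      nlinarith [Real.exp_pos (-((x i)⁻¹ * t))]
    calc (1 - (x i0)⁻¹ * t) ^ 2 * (∏ i ∈ Finset.univ.erase i0, (1 - (x i)⁻¹ * t) ^ 2) *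
          (x i0 / (x i0 - t))
        = ((1 - (x i0)⁻¹ * t) ^ 2 * (x i0 / (x i0 - t))) *
          ∏ i ∈ Finset.univ.erase i0, (1 - (x i)⁻¹ * t) ^ 2 := by ring
      _ ≤ Real.exp (-((x i0)⁻¹ * t)) *
          ∏ i ∈ Finset.univ.erase i0, Real.exp (-((x i)⁻¹ * t)) :=
          mul_le_mul hA hB (Finset.prod_nonneg fun i _ => sq_nonneg _)
            (Real.exp_pos _).le
  have hderiv : (Polynomial.derivative p).eval 0 = -S := by
    rw [hp, deriv_eval0, hSdef]
  have habs : |(Polynomial.derivative p).eval 0| = S := by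
    rw [hderiv, abs_neg, abs_of_pos hSpos]
  rw [habs]
  calc t ^ ν * φ t ^ 2 ≤ t ^ ν * Real.exp (-(t * S)) :=
        mul_le_mul_of_nonneg_left h1 (Real.rpow_nonneg ht0 ν)
    _ ≤ ν ^ ν * S ^ (-ν) := key_rpow ν S t hν hSpos ht0
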